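/- Let μ > 0, h > 0, ψ₁, ψ₂ ∈ ℝ with δψ = ψ₂ − ψ₁, let ψ(s) = ψ₁ + δψ·s/h be linear on [0, h], and let u₁, u₂ ∈ ℝ. Define the harmonic average of the coefficient μ·exp(ψ) along the segment by μ_H = h / (∫₀^h (μ·exp(ψ(s)))^{-1} ds), and the Slotboom values n₁ = u₁·exp(−ψ₁) and n₂ = u₂·exp(−ψ₂). Then the two-point edge flux of the edge-averaged finite element (EAFE) method coincides with the Scharfetter–Gummel flux: μ_H·(n₂ − n₁)/h = (μ/h)·(Be(δψ)·u₂ − Be(−δψ)·u₁). -/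

import Mathlib

/-- The inverse Bernoulli function `Be(x) = x / (exp x - 1)`, with `Be 0 = 1`. -/
noncomputable def Be (x : ℝ) : ℝ := if x = 0 then 1 else x / (Real.exp x - 1)

lemma int_exp_lin (c d h : ℝ) (hd : d ≠ 0) :
    ∫ s in (0:ℝ)..h, Real.exp (c + d*s) = (Real.exp (c + d*h) - Real.exp c)/d := by
  have key : ∀ s ∈ Set.uIcc (0:ℝ) h,
      HasDerivAt (fun s => Real.exp (c + d*s)/d) (Real.exp (c+d*s)) s := by
    intro s _
    have h1 : HasDerivAt (fun s => c + d*s) d s := by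
      simpa using ((hasDerivAt_id s).const_mul d).const_add c
    have h2 := (h1.exp).div_const d
    simpa [mul_div_assoc, div_self hd] using h2
  rw [intervalIntegral.integral_eq_sub_of_hasDerivAt key
    (Continuous.intervalIntegrable (by continuity) _ _)]
  ring

/-- The EAFE two-point edge flux (harmonic average of `μ·exp ψ` along the edge,
applied to the Slotboom values `nᵢ = uᵢ·exp(−ψᵢ)`) coincides with the
Scharfetter–Gummel flux. -/
theorem eafe_flux_eq_scharfetter_gummel
    (μ h ψ₁ ψ₂ u₁ u₂ : ℝ) (hμ : 0 < μ) (hh : 0 < h) :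
    (h / ∫ s in (0 : ℝ)..h, (μ * Real.exp (ψ₁ + (ψ₂ - ψ₁) * s / h))⁻¹)
        * ((u₂ * Real.exp (-ψ₂)) - (u₁ * Real.exp (-ψ₁))) / h
      = (μ / h) * (Be (ψ₂ - ψ₁) * u₂ - Be (-(ψ₂ - ψ₁)) * u₁) := by
  have hμ' := hμ.ne'
  have hh' := hh.ne'
  obtain ⟨δ, hδ⟩ : ∃ δ, ψ₂ - ψ₁ = δ := ⟨_, rfl⟩
  have hψ2 : ψ₂ = ψ₁ + δ := by linarith
  rw [hδ, hψ2]
  have hint : ∀ s : ℝ, (μ * Real.exp (ψ₁ + δ * s / h))⁻¹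
      = μ⁻¹ * Real.exp (-ψ₁ + (-δ/h) * s) := by
    intro s
    rw [mul_inv, ← Real.exp_neg]
    ring_nf
  by_cases h0 : δ = 0
  · simp only [h0, zero_mul, zero_div, add_zero, neg_zero,
      intervalIntegral.integral_const, smul_eq_mul, sub_zero, Be, if_pos rfl,
      Real.exp_neg]
    field_simp
    simp
  · have hI : (∫ s in (0 : ℝ)..h, (μ * Real.exp (ψ₁ + δ * s / h))⁻¹)
        = μ⁻¹ * ((Real.exp (-ψ₁ + (-δ/h)*h) - Real.exp (-ψ₁))/(-δ/h)) := by
      simp_rw [hint]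
      rw [intervalIntegral.integral_const_mul, int_exp_lin _ _ _
        (div_ne_zero (neg_ne_zero.mpr h0) hh')]
    have hx : (-ψ₁ + -δ/h*h) = -ψ₁ + -δ := by field_simp
    rw [hI, Be, Be, if_neg h0, if_neg (neg_ne_zero.mpr h0), hx,
      show -(ψ₁ + δ) = -ψ₁ + -δ by ring]
    simp only [Real.exp_add, Real.exp_neg]
    have ha1 : Real.exp δ - 1 ≠ 0 := by
      intro hc
      apply h0
      have : Real.exp δ = Real.exp 0 := by rw [Real.exp_zero]; linarith
      exact Real.exp_eq_exp.mp this
    have ha0 : Real.exp δ ≠ 0 := Real.exp_ne_zero δ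
    have hE0 : Real.exp ψ₁ ≠ 0 := Real.exp_ne_zero ψ₁
    have ha2 : (Real.exp δ)⁻¹ - 1 ≠ 0 := by
      intro hc
      apply ha1
      have : (Real.exp δ)⁻¹ = 1 := by linarith
      have := inv_eq_one.mp this
      linarith
    generalize Real.exp δ = a at *
    generalize Real.exp ψ₁ = E at *
    have ha1' : (1:ℝ) - a ≠ 0 := fun hc => ha1 (by linarith)
    rw [show E⁻¹ * a⁻¹ - E⁻¹ = (1-a)/(E*a) by field_simp,
      show a⁻¹ - 1 = (1-a)/a by field_simp]
    field_simp
    ring
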